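/- arXiv:1505.01417 — 2 statements merged into one kernel-verified Lean document; each statement's English description precedes it below -/
import Mathlib

section
/- A random variable $Z$ with values in $\mathbb{N}_0$ has a Poisson distribution with mean $\lambda>0$ if and only if for every bounded function $f:\mathbb{N}_0\to\mathbb{R}$ one has $\mathbb{E}[\lambda f(Z+1) - Z f(Z)] = 0$. -/
open MeasureTheory

/-- Chen's characterization of the Poisson distribution: an integrable `ℕ`-valued random
variable `Z` is Poisson with mean `λ` iff `E[λ f(Z+1) - Z f(Z)] = 0` for every bounded
`f : ℕ → ℝ`. -/
theorem stmt_4 {Ω : Type*} [MeasurableSpace Ω] (μ : Measure Ω) [IsProbabilityMeasure μ]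
    (Z : Ω → ℕ) (hZ : Measurable Z)
    (hint : Integrable (fun ω => (Z ω : ℝ)) μ)
    (lam : ℝ) (hlam : 0 < lam) :
    (∀ k : ℕ, μ {ω | Z ω = k}
        = ENNReal.ofReal (Real.exp (-lam) * lam ^ k / k.factorial))
      ↔ ∀ f : ℕ → ℝ, (∃ C, ∀ k, |f k| ≤ C) →
          ∫ ω, (lam * f (Z ω + 1) - (Z ω : ℝ) * f (Z ω)) ∂μ = 0 := by
  have hset : ∀ k : ℕ, MeasurableSet {ω | Z ω = k} := fun k =>
    hZ (measurableSet_singleton k)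
  have hfin : ∀ k : ℕ, μ {ω | Z ω = k} ≠ ⊤ := fun k => (measure_lt_top μ _).ne
  set p : ℕ → ℝ := fun k => (μ {ω | Z ω = k}).toReal with hp
  have hpre : ∀ k : ℕ, Z ⁻¹' {k} = {ω | Z ω = k} := fun k => rfl
  have hmap : ∀ k : ℕ, (μ.map Z) {k} = μ {ω | Z ω = k} := fun k => by
    rw [Measure.map_apply hZ (measurableSet_singleton k), hpre]
  constructor
  · -- Poisson ⟹ Stein identity
    intro hpois f hCex
    obtain ⟨C, hC⟩ := hCex
    have hC0 : 0 ≤ C := le_trans (abs_nonneg _) (hC 0)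
    have hpR : ∀ k : ℕ, p k = Real.exp (-lam) * lam ^ k / (k.factorial : ℝ) := by
      intro k
      rw [hp]
      simp only [hpois k]
      rw [ENNReal.toReal_ofReal (by positivity)]
    set g : ℕ → ℝ := fun n => lam * f (n + 1) - (n : ℝ) * f n with hg
    -- integrability
    have hmg : ∀ h : ℕ → ℝ, Measurable h := fun h => measurable_from_nat
    have hint1 : Integrable (fun ω => lam * f (Z ω + 1)) μ := by
      refine Integrable.mono' (integrable_const (|lam| * C)) ?_ ?_
      · exact Measurable.aestronglyMeasurable
          (Measurable.comp (g := fun n : ℕ => lam * f (n + 1)) measurable_from_nat hZ)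
      · filter_upwards with ω
        rw [norm_mul, Real.norm_eq_abs, Real.norm_eq_abs]
        exact mul_le_mul_of_nonneg_left (hC _) (abs_nonneg _)
    have hint2 : Integrable (fun ω => (Z ω : ℝ) * f (Z ω)) μ := by
      refine Integrable.mono' (hint.const_mul C) ?_ ?_
      · exact Measurable.aestronglyMeasurable
          (Measurable.comp (g := fun n : ℕ => (n : ℝ) * f n) measurable_from_nat hZ)
      · filter_upwards with ω
        rw [norm_mul, Real.norm_eq_abs, Real.norm_eq_abs,
          abs_of_nonneg (by positivity : (0:ℝ) ≤ (Z ω : ℝ))]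
        calc (Z ω : ℝ) * |f (Z ω)| ≤ (Z ω : ℝ) * C :=
              mul_le_mul_of_nonneg_left (hC _) (by positivity)
          _ = C * (Z ω : ℝ) := mul_comm _ _
    have hintg : Integrable (fun ω => g (Z ω)) μ := hint1.sub hint2
    have hmain : (∫ ω, g (Z ω) ∂μ) = ∑' n, p n * g n := by
      rw [← integral_map hZ.aemeasurable ((hmg g).stronglyMeasurable.aestronglyMeasurable)]
      rw [integral_countable' ?hi]
      case hi =>
        exact (integrable_map_measure
          ((hmg g).stronglyMeasurable.aestronglyMeasurable) hZ.aemeasurable).mpr hintg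
      refine tsum_congr fun n => ?_
      rw [measureReal_def, hmap n, smul_eq_mul]
    -- the summands
    set a : ℕ → ℝ := fun n => (n : ℝ) * p n * f n with ha
    have hkey : ∀ n : ℕ, lam * p n = ((n : ℝ) + 1) * p (n + 1) := by
      intro n
      rw [hpR n, hpR (n + 1)]
      have hfac : ((n + 1).factorial : ℝ) = ((n : ℝ) + 1) * (n.factorial : ℝ) := by
        rw [Nat.factorial_succ]; push_cast; ring
      rw [hfac]
      have h1 : (n.factorial : ℝ) ≠ 0 := Nat.cast_ne_zero.mpr n.factorial_ne_zero
      have h2 : ((n : ℝ) + 1) ≠ 0 := by positivity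
      field_simp
      ring
    have hshift : ∀ n : ℕ, a (n + 1) = lam * p n * f (n + 1) := by
      intro n
      rw [ha]
      simp only [Nat.cast_add, Nat.cast_one]
      rw [← hkey n]
    have hpsum : Summable p := by
      have : Summable (fun n : ℕ => Real.exp (-lam) * (lam ^ n / (n.factorial : ℝ))) :=
        (Real.summable_pow_div_factorial lam).mul_left _
      refine this.congr fun n => ?_
      rw [hpR n, mul_div_assoc]
    have hbsum : Summable (fun n : ℕ => lam * p n * f (n + 1)) := by
      refine Summable.of_norm_bounded (g := fun n => lam * C * p n) ((hpsum.mul_left _)) ?_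
      intro n
      rw [Real.norm_eq_abs, abs_mul, abs_mul, abs_of_nonneg hlam.le,
        abs_of_nonneg (ENNReal.toReal_nonneg)]
      calc lam * p n * |f (n + 1)| ≤ lam * p n * C :=
            mul_le_mul_of_nonneg_left (hC _) (by positivity)
        _ = lam * C * p n := by ring
    have hasum : Summable a := by
      rw [← summable_nat_add_iff 1]
      exact hbsum.congr fun n => (hshift n).symm
    have hterm : ∀ n, p n * g n = lam * p n * f (n + 1) - a n := by
      intro n
      rw [hg, ha]
      ring
    rw [hmain]
    have : ∑' n, p n * g n = (∑' n, lam * p n * f (n + 1)) - ∑' n, a n := by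
      rw [← Summable.tsum_sub hbsum hasum]
      exact tsum_congr hterm
    rw [this]
    have h0 : a 0 = 0 := by simp [ha]
    have := Summable.tsum_eq_zero_add hasum
    rw [h0, zero_add] at this
    rw [← (tsum_congr hshift : ∑' n, a (n+1) = _), ← this, sub_self]
  · -- Stein identity ⟹ Poisson
    intro hf
    -- recursion
    have hrec : ∀ k : ℕ, lam * p k = ((k : ℝ) + 1) * p (k + 1) := by
      intro k
      have hb : ∃ C, ∀ n : ℕ, |(if n = k + 1 then (1:ℝ) else 0)| ≤ C := by
        refine ⟨1, fun n => ?_⟩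
        split <;> simp
      have h := hf (fun n => if n = k + 1 then (1:ℝ) else 0) hb
      have heq : (fun ω => lam * (if Z ω + 1 = k + 1 then (1:ℝ) else 0)
            - (Z ω : ℝ) * (if Z ω = k + 1 then (1:ℝ) else 0))
          = fun ω => ({ω | Z ω = k}.indicator (fun _ => lam) ω)
            - ({ω | Z ω = k + 1}.indicator (fun _ => ((k:ℝ) + 1)) ω) := by
        funext ω
        simp only [Set.indicator_apply, Set.mem_setOf_eq, Nat.add_right_cancel_iff]
        by_cases h1 : Z ω = k
        · have h2 : ¬ (Z ω = k + 1) := by omega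
          simp [h1, h2]
        · by_cases h2 : Z ω = k + 1
          · simp [h1, h2]
          · simp [h1, h2]
      rw [heq] at h
      have hi1 : Integrable ({ω | Z ω = k}.indicator (fun _ => lam)) μ := by
        rw [integrable_indicator_iff (hset k)]
        exact (integrable_const lam).integrableOn
      have hi2 : Integrable ({ω | Z ω = k + 1}.indicator (fun _ => ((k:ℝ)+1))) μ := by
        rw [integrable_indicator_iff (hset (k+1))]
        exact (integrable_const _).integrableOn
      rw [integral_sub hi1 hi2, integral_indicator_const _ (hset k),
        integral_indicator_const _ (hset (k+1)), smul_eq_mul, smul_eq_mul,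
        sub_eq_zero] at h
      rw [hp]
      simpa [mul_comm, measureReal_def] using h
    -- explicit form
    have hform : ∀ k : ℕ, p k = p 0 * lam ^ k / (k.factorial : ℝ) := by
      intro k
      induction k with
      | zero => simp
      | succ n ih =>
        have h2 : ((n : ℝ) + 1) ≠ 0 := by positivity
        have hpn1 : p (n + 1) = lam * p n / ((n : ℝ) + 1) := by
          rw [hrec n]; field_simp
        rw [hpn1, ih]
        have hfac : ((n + 1).factorial : ℝ) = ((n : ℝ) + 1) * (n.factorial : ℝ) := by
          rw [Nat.factorial_succ]; push_cast; ring
        rw [hfac]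
        have h1 : (n.factorial : ℝ) ≠ 0 := Nat.cast_ne_zero.mpr n.factorial_ne_zero
        field_simp
        ring
    -- normalization
    have htotE : (∑' k : ℕ, μ {ω | Z ω = k}) = 1 := by
      rw [← measure_iUnion ?hd fun k => hset k]
      case hd =>
        intro i j hij
        refine Set.disjoint_left.mpr fun ω h1 h2 => hij ?_
        simp only [Set.mem_setOf_eq] at h1 h2
        rw [← h1, ← h2]
      have : (⋃ k : ℕ, {ω | Z ω = k}) = Set.univ := by
        ext ω; simp
      rw [this, measure_univ]
    have htot : (∑' k : ℕ, p k) = 1 := by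
      rw [hp, ← ENNReal.tsum_toReal_eq hfin, htotE, ENNReal.toReal_one]
    have hexp : (∑' n : ℕ, lam ^ n / (n.factorial : ℝ)) = Real.exp lam := by
      rw [Real.exp_eq_exp_ℝ, NormedSpace.exp_eq_tsum_div]
    have hp0 : p 0 = Real.exp (-lam) := by
      have h1 : (∑' k : ℕ, p k) = p 0 * Real.exp lam := by
        rw [← hexp, ← tsum_mul_left]
        exact tsum_congr fun k => by rw [hform k, mul_div_assoc]
      rw [htot] at h1
      rw [Real.exp_neg]
      field_simp [Real.exp_ne_zero lam] at h1 ⊢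
      linarith
    intro k
    rw [← ENNReal.ofReal_toReal (hfin k)]
    congr 1
    show p k = _
    rw [hform k, hp0]
end

section
/- Let $p,q\in(0,1)$ with $p+q=1$, let $X$ be a random variable with $P(X=1)=p$, $P(X=-1)=q$, and let $G,H$ be real random variables independent of $X$ with $H-G$ taking integer values and $G,H$ integer valued. Let $f:\mathbb{Z}\to\mathbb{R}$ be bounded with $\|\Delta^2 f\|_\infty<\infty$. Set $D:=\sqrt{pq}(H-G)$ and $F:=H\mathbf{1}_{\{X=1\}}+G\mathbf{1}_{\{X=-1\}}$. Then $\big|\sqrt{pq}\big(f(H)-f(G)-\Delta f(F)(H-G)\big)\big| \le \|\Delta^2 f\|_\infty\,\frac{1}{2\sqrt{pq}}\,D\,(D+\sqrt{pq}\,X)$ pointwise, where $\Delta f(k)=f(k+1)-f(k)$. -/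
section Aux
variable (f : ℤ → ℝ) (C : ℝ) (hC : ∀ k : ℤ, |f (k + 2) - 2 * f (k + 1) + f k| ≤ C)

include hC

lemma aux_L1 (a : ℤ) : ∀ n : ℕ, |f (a + n + 1) - f (a + n) - (f (a + 1) - f a)| ≤ C * n := by
  intro n
  induction n with
  | zero => simp
  | succ n ih =>
    have h1 := hC (a + n)
    have e1 : a + ((n + 1 : ℕ) : ℤ) = a + n + 1 := by push_cast; ring
    rw [e1]
    have habs : |f (a + n + 1 + 1) - f (a + n + 1) - (f (a + 1) - f a)|
        ≤ |f (a + n + 1) - f (a + n) - (f (a + 1) - f a)|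
          + |f (a + n + 2) - 2 * f (a + n + 1) + f (a + n)| := by
      have := abs_add_le (f (a + n + 1) - f (a + n) - (f (a + 1) - f a))
        (f (a + n + 2) - 2 * f (a + n + 1) + f (a + n))
      have e2 : a + n + 2 = a + n + 1 + 1 := by ring
      rw [e2] at this ⊢
      convert this using 2
      · rfl
      · rfl
      · ring
    push_cast
    linarith

lemma aux_A (a : ℤ) : ∀ n : ℕ,
    |f (a + n) - f a - n * (f (a + 1) - f a)| ≤ C * (n * (n - 1)) / 2 := by
  intro n
  induction n with
  | zero => simp
  | succ n ih =>
    have h1 := aux_L1 f C hC a n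
    have e1 : a + ((n + 1 : ℕ) : ℤ) = a + n + 1 := by push_cast; ring
    rw [e1]
    have habs : |f (a + n + 1) - f a - ((n : ℝ) + 1) * (f (a + 1) - f a)|
        ≤ |f (a + n) - f a - n * (f (a + 1) - f a)|
          + |f (a + n + 1) - f (a + n) - (f (a + 1) - f a)| := by
      have := abs_add_le (f (a + n) - f a - (n : ℝ) * (f (a + 1) - f a))
        (f (a + n + 1) - f (a + n) - (f (a + 1) - f a))
      convert this using 2
      · rfl
      · rfl
      · ring
    push_cast
    nlinarith [habs, ih, h1]

lemma aux_B (a : ℤ) : ∀ n : ℕ,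
    |f (a + n) - f a - n * (f (a + n + 1) - f (a + n))| ≤ C * (n * (n + 1)) / 2 := by
  intro n
  induction n with
  | zero => simp
  | succ n ih =>
    have h1 := hC (a + n)
    have e1 : a + ((n + 1 : ℕ) : ℤ) = a + n + 1 := by push_cast; ring
    rw [e1]
    have habs : |f (a + n + 1) - f a - ((n : ℝ) + 1) * (f (a + n + 1 + 1) - f (a + n + 1))|
        ≤ |f (a + n) - f a - n * (f (a + n + 1) - f (a + n))|
          + ((n : ℝ) + 1) * |f (a + n + 2) - 2 * f (a + n + 1) + f (a + n)| := by
      have h2 := abs_add_le (f (a + n) - f a - (n : ℝ) * (f (a + n + 1) - f (a + n)))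
        (-(((n : ℝ) + 1) * (f (a + n + 2) - 2 * f (a + n + 1) + f (a + n))))
      rw [abs_neg, abs_mul] at h2
      have hn : |(n : ℝ) + 1| = (n : ℝ) + 1 := abs_of_nonneg (by positivity)
      rw [hn] at h2
      have e2 : a + n + 2 = a + n + 1 + 1 := by ring
      rw [e2] at h2 ⊢
      convert h2 using 2
      · rfl
      · rfl
      · ring
    have hn1 : (0 : ℝ) ≤ (n : ℝ) + 1 := by positivity
    have h3 : ((n : ℝ) + 1) * |f (a + n + 1 + 1) - 2 * f (a + n + 1) + f (a + n)|
        ≤ ((n : ℝ) + 1) * C := by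
      apply mul_le_mul_of_nonneg_left _ hn1
      have e2 : a + n + 1 + 1 = a + n + 2 := by ring
      rw [e2]; exact h1
    push_cast
    nlinarith [habs, ih, h3]

/-- The pure integer inequality. -/
lemma aux_main (a b x : ℤ) (hx : x = 1 ∨ x = -1) :
    |f b - f a - (f ((if x = 1 then b else a) + 1) - f (if x = 1 then b else a)) * ((b : ℝ) - a)|
      ≤ C / 2 * ((b : ℝ) - a) * ((b : ℝ) - a + x) := by
  rcases hx with hx | hx <;> subst hx
  · simp only [if_pos rfl]
    rcases le_or_gt a b with hab | hab
    · obtain ⟨n, hn⟩ : ∃ n : ℕ, b = a + n :=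
        ⟨(b - a).toNat, by omega⟩
      subst hn
      have := aux_B f C hC a n
      have e : ((a + n : ℤ) : ℝ) - a = (n : ℝ) := by push_cast; ring
      rw [e]
      push_cast
      calc |f (a + n) - f a - (f (a + n + 1) - f (a + n)) * (n : ℝ)|
          = |f (a + n) - f a - n * (f (a + n + 1) - f (a + n))| := by ring_nf
        _ ≤ C * (n * (n + 1)) / 2 := this
        _ = C / 2 * n * (n + 1) := by ring
    · obtain ⟨n, hn⟩ : ∃ n : ℕ, a = b + n := ⟨(a - b).toNat, by omega⟩
      subst hn
      have := aux_A f C hC b n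
      have e : ((b : ℝ)) - ((b + n : ℤ) : ℝ) = -(n : ℝ) := by push_cast; ring
      push_cast
      calc |f b - f (b + n) - (f (b + 1) - f b) * ((b : ℝ) - (b + n))|
          = |f (b + n) - f b - n * (f (b + 1) - f b)| := by
            rw [← abs_neg]; ring_nf
        _ ≤ C * (n * (n - 1)) / 2 := this
        _ = C / 2 * ((b : ℝ) - (b + n)) * ((b : ℝ) - (b + n) + 1) := by ring
  · simp only [if_neg (by norm_num : (-1 : ℤ) ≠ 1)]
    rcases le_or_gt a b with hab | hab
    · obtain ⟨n, hn⟩ : ∃ n : ℕ, b = a + n := ⟨(b - a).toNat, by omega⟩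
      subst hn
      have := aux_A f C hC a n
      push_cast
      calc |f (a + n) - f a - (f (a + 1) - f a) * ((a : ℝ) + n - a)|
          = |f (a + n) - f a - n * (f (a + 1) - f a)| := by ring_nf
        _ ≤ C * (n * (n - 1)) / 2 := this
        _ = C / 2 * ((a : ℝ) + n - a) * ((a : ℝ) + n - a + (-1 : ℝ)) := by push_cast; ring
    · obtain ⟨n, hn⟩ : ∃ n : ℕ, a = b + n := ⟨(a - b).toNat, by omega⟩
      subst hn
      have := aux_B f C hC b n
      push_cast
      calc |f b - f (b + n) - (f (b + n + 1) - f (b + n)) * ((b : ℝ) - (b + n))|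
          = |f (b + n) - f b - n * (f (b + n + 1) - f (b + n))| := by
            rw [← abs_neg]; ring_nf
        _ ≤ C * (n * (n + 1)) / 2 := this
        _ = C / 2 * ((b : ℝ) - (b + n)) * ((b : ℝ) - (b + n) + (-1 : ℝ)) := by push_cast; ring

end Aux

open MeasureTheory

/-- Pointwise error estimate in the discrete chain rule: with `D = √(pq)(H - G)` and
`F = H 1_{X=1} + G 1_{X=-1}`,
`|√(pq)(f(H) - f(G) - Δf(F)(H - G))| ≤ ‖Δ²f‖_∞ · (2√(pq))⁻¹ · D (D + √(pq) X)`. -/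
theorem stmt_16 {Ω : Type*} [MeasurableSpace Ω] (μ : Measure Ω) [IsProbabilityMeasure μ]
    (p q : ℝ) (hp : 0 < p) (hp1 : p < 1) (hq : q = 1 - p)
    (X : Ω → ℤ) (hX : ∀ ω, X ω = 1 ∨ X ω = -1) (hXmeas : Measurable X)
    (G H : Ω → ℤ) (hGHmeas : Measurable fun ω => (G ω, H ω))
    (hindep : ProbabilityTheory.IndepFun X (fun ω => (G ω, H ω)) μ)
    (f : ℤ → ℝ) (hbdd : ∃ M, ∀ k, |f k| ≤ M)
    (C : ℝ) (hC : ∀ k : ℤ, |f (k + 2) - 2 * f (k + 1) + f k| ≤ C) :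
    ∀ ω,
      |Real.sqrt (p * q) * (f (H ω) - f (G ω)
          - (f ((if X ω = 1 then H ω else G ω) + 1)
              - f (if X ω = 1 then H ω else G ω)) * ((H ω : ℝ) - G ω))|
        ≤ C * (1 / (2 * Real.sqrt (p * q)))
            * (Real.sqrt (p * q) * ((H ω : ℝ) - G ω))
            * (Real.sqrt (p * q) * ((H ω : ℝ) - G ω) + Real.sqrt (p * q) * (X ω : ℝ)) := by
  intro ω
  have hq0 : 0 < q := by rw [hq]; linarith
  have hs : 0 < Real.sqrt (p * q) := Real.sqrt_pos.2 (by positivity)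
  have key := aux_main f C hC (G ω) (H ω) (X ω) (hX ω)
  rw [abs_mul, abs_of_nonneg hs.le]
  have e : C * (1 / (2 * Real.sqrt (p * q)))
        * (Real.sqrt (p * q) * ((H ω : ℝ) - G ω))
        * (Real.sqrt (p * q) * ((H ω : ℝ) - G ω) + Real.sqrt (p * q) * (X ω : ℝ))
      = Real.sqrt (p * q)
        * (C / 2 * ((H ω : ℝ) - G ω) * (((H ω : ℝ) - G ω) + (X ω : ℝ))) := by
    field_simp
  rw [e]
  exact mul_le_mul_of_nonneg_left key hs.le
end
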